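/- arXiv:2203.05639 — 2 statements merged into one kernel-verified Lean document; each statement's English description precedes it below -/
import Mathlib

section
/- Let {q_k}_{k≥0} be a sequence of nonnegative reals with q_0 > 0. For M ∈ ℕ and any integer q with 1 ≤ q < 2^M, the Walsh–Nörlund mean of index 2^M + q of the function f = D_{2^{M+1}} − D_{2^M} satisfies, for every x ∈ [0,1): t_{2^M+q}(f)(x) = ( w_{2^M}(x) / Q_{2^M+q} ) Σ_{k=1}^{q} q_{q−k} D_k(x). -/
open MeasureTheory Filter
open scoped ENNReal NNReal

noncomputable section

namespace Walsh

/-- Lebesgue measure restricted to `[0,1)`. -/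
def μI : Measure ℝ := volume.restrict (Set.Ico (0:ℝ) 1)

/-- The `k`-th binary digit `x_k` of `x ∈ [0,1)`, using the expansion terminating
in `0`'s for dyadic rationals. -/
def digit (k : ℕ) (x : ℝ) : ℕ := (⌊x * 2 ^ (k + 1)⌋).toNat % 2

/-- `ε_k(n)`, the `k`-th binary coefficient of `n`. -/
def eps (k n : ℕ) : ℕ := if n.testBit k then 1 else 0

/-- Walsh–Paley function `w_n(x) = (-1)^{Σ_k ε_k(n) x_k}`. -/
def walsh (n : ℕ) (x : ℝ) : ℝ :=
  (-1 : ℝ) ^ (∑ k ∈ Finset.range (n + 1), eps k n * digit k x)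

/-- Walsh–Dirichlet kernel `D_n = Σ_{k=0}^{n-1} w_k`. -/
def D (n : ℕ) (x : ℝ) : ℝ := ∑ k ∈ Finset.range n, walsh k x

/-- Walsh–Fejér kernel `K_n = (1/n) Σ_{k=1}^{n} D_k`. -/
def K (n : ℕ) (x : ℝ) : ℝ := (1 / (n : ℝ)) * ∑ k ∈ Finset.Icc 1 n, D k x

/-- Partial sums `S_M(f) = Σ_{i=0}^{M-1} f̂(i) w_i` of the Walsh–Fourier series. -/
def S (f : ℝ → ℝ) (M : ℕ) (x : ℝ) : ℝ :=
  ∑ i ∈ Finset.range M, (∫ t in Set.Ico (0:ℝ) 1, f t * walsh i t) * walsh i x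

/-- `Q_n = q_0 + ⋯ + q_{n-1}`. -/
def Q (q : ℕ → ℝ) (n : ℕ) : ℝ := ∑ k ∈ Finset.range n, q k

/-- Walsh–Nörlund mean `t_n(f) = (1/Q_n) Σ_{k=1}^n q_{n-k} S_k(f)`. -/
def t (q : ℕ → ℝ) (n : ℕ) (f : ℝ → ℝ) (x : ℝ) : ℝ :=
  (1 / Q q n) * ∑ k ∈ Finset.Icc 1 n, q (n - k) * S f k x

/-- Walsh–Nörlund kernel `F_n = (1/Q_n) Σ_{k=1}^n q_{n-k} D_k`. -/
def F (q : ℕ → ℝ) (n : ℕ) (x : ℝ) : ℝ :=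
  (1 / Q q n) * ∑ k ∈ Finset.Icc 1 n, q (n - k) * D k x

/-- Maximal Nörlund operator `t^*(f) = sup_{n ≥ 1} |t_n(f)|`, valued in `ℝ≥0∞`. -/
def tstar (q : ℕ → ℝ) (f : ℝ → ℝ) (x : ℝ) : ℝ≥0∞ :=
  ⨆ n ∈ Set.Ici 1, ENNReal.ofReal |t q n f x|

/-- `L^p[0,1)` quasinorm (`0 < p ≤ 1`) of a real function, valued in `ℝ≥0∞`. -/
def LpNorm (p : ℝ) (g : ℝ → ℝ) : ℝ≥0∞ :=
  (∫⁻ x in Set.Ico (0:ℝ) 1, ENNReal.ofReal |g x| ^ p) ^ (1 / p)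

/-- `L^p[0,1)` quasinorm of an `ℝ≥0∞`-valued function. -/
def LpNormE (p : ℝ) (g : ℝ → ℝ≥0∞) : ℝ≥0∞ :=
  (∫⁻ x in Set.Ico (0:ℝ) 1, g x ^ p) ^ (1 / p)

/-- `L^∞[0,1)` norm. -/
def LinfNorm (g : ℝ → ℝ) : ℝ≥0∞ := essSup (fun x => ENNReal.ofReal |g x|) μI

/-- Dyadic maximal function `E^*(f) = sup_m |S_{2^m}(f)|`, valued in `ℝ≥0∞`. -/
def maxS (f : ℝ → ℝ) (x : ℝ) : ℝ≥0∞ := ⨆ m : ℕ, ENNReal.ofReal |S f (2 ^ m) x|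

/-- Dyadic Hardy space quasinorm `‖f‖_{H_p} = ‖sup_m |S_{2^m} f|‖_{L^p}`. -/
def HpNorm (p : ℝ) (f : ℝ → ℝ) : ℝ≥0∞ :=
  (∫⁻ x in Set.Ico (0:ℝ) 1, maxS f x ^ p) ^ (1 / p)

/-- Dyadic (logical) addition `x ∔ y = Σ_k |x_k - y_k| 2^{-(k+1)}`. -/
def dadd (x y : ℝ) : ℝ :=
  ∑' k : ℕ, |(digit k x : ℝ) - (digit k y : ℝ)| * (2 : ℝ)⁻¹ ^ (k + 1)

/-- The dyadic interval `I_N = [0, 2^{-N})`. -/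
def IN (N : ℕ) : Set ℝ := Set.Ico (0:ℝ) (1 / 2 ^ N)

/-- `F_{n,1} = (w_n/Q_n) Σ_{j=1}^r Q_{n^{(j-1)}} w_{2^{n_j}} D_{2^{n_j}}`,
the first part of the Nörlund kernel decomposition. The sum over the binary
decomposition `n = 2^{n_1} + ⋯ + 2^{n_r}` is re-indexed over the set bit
positions `i` of `n`; if `i = n_j` then `n^{(j-1)} = n mod 2^{i+1}`. -/
def F1 (q : ℕ → ℝ) (n : ℕ) (x : ℝ) : ℝ :=
  (walsh n x / Q q n) *
    ∑ i ∈ Finset.range (n + 1),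
      if n.testBit i then Q q (n % 2 ^ (i + 1)) * walsh (2 ^ i) x * D (2 ^ i) x else 0

end Walsh

namespace Walsh

section Aux

open MeasureTheory

lemma eps_eq_zero {k n : ℕ} (h : n < 2 ^ k) : eps k n = 0 := by
  simp [eps, Nat.testBit_lt_two_pow h]

lemma sum_eps_mul (n : ℕ) {R : ℕ} (hn : n < 2 ^ R) (g : ℕ → ℕ) :
    ∑ k ∈ Finset.range R, eps k n * g k = ∑ k ∈ Finset.range (n + 1), eps k n * g k := by
  rcases le_total R (n + 1) with h | h
  · refine Finset.sum_subset (Finset.range_subset_range.2 h) (fun k _ hk => ?_)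
    have hk' : R ≤ k := by simpa using hk
    have : n < 2 ^ k := lt_of_lt_of_le hn (Nat.pow_le_pow_right (by norm_num) hk')
    simp [eps_eq_zero this]
  · refine (Finset.sum_subset (Finset.range_subset_range.2 h) (fun k _ hk => ?_)).symm
    have hk' : n + 1 ≤ k := by simpa using hk
    have : n < 2 ^ k :=
      lt_of_lt_of_le (Nat.lt_two_pow_self (n := n)) (Nat.pow_le_pow_right (by norm_num) (by omega))
    simp [eps_eq_zero this]

lemma walsh_eq_pow_sum (n : ℕ) {R : ℕ} (hn : n < 2 ^ R) (x : ℝ) :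
    walsh n x = (-1 : ℝ) ^ (∑ k ∈ Finset.range R, eps k n * digit k x) := by
  rw [walsh, sum_eps_mul n hn]

lemma digit_eq_eps {K k j : ℕ} (hk : k < K) {x : ℝ}
    (h1 : (j : ℝ) / 2 ^ K ≤ x) (h2 : x < ((j : ℝ) + 1) / 2 ^ K) :
    digit k x = eps (K - 1 - k) j := by
  set d := K - 1 - k with hd
  have hKdk : d + (k + 1) = K := by omega
  set jd := j / 2 ^ d with hjd
  have h2K : (2 : ℝ) ^ K = 2 ^ d * 2 ^ (k + 1) := by rw [← pow_add, hKdk]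
  have hp1 : (0 : ℝ) < 2 ^ (k + 1) := by positivity
  have hp2 : (0 : ℝ) < 2 ^ d := by positivity
  have hfloor : ⌊x * 2 ^ (k + 1)⌋ = (jd : ℤ) := by
    rw [Int.floor_eq_iff]
    have e1 : (jd : ℝ) ≤ (j : ℝ) / 2 ^ d := by
      have := Nat.cast_div_le (m := j) (n := 2 ^ d) (α := ℝ)
      push_cast at this ⊢
      simpa using this
    have e2 : (j : ℝ) / 2 ^ d = (j : ℝ) / 2 ^ K * 2 ^ (k + 1) := by
      rw [h2K]; field_simp
    have hj1 : j + 1 ≤ 2 ^ d * (jd + 1) := by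
      have q1 : 2 ^ d * jd + j % 2 ^ d = j := Nat.div_add_mod j (2 ^ d)
      have q2 : j % 2 ^ d < 2 ^ d := Nat.mod_lt _ (Nat.pow_pos (by norm_num))
      have q3 : 2 ^ d * (jd + 1) = 2 ^ d * jd + 2 ^ d := by ring
      omega
    have e3 : ((j : ℝ) + 1) / 2 ^ d ≤ (jd : ℝ) + 1 := by
      rw [div_le_iff₀ hp2]
      have : ((j : ℝ) + 1) ≤ (2 : ℝ) ^ d * ((jd : ℝ) + 1) := by exact_mod_cast hj1
      linarith
    have e4 : ((j : ℝ) + 1) / 2 ^ K * 2 ^ (k + 1) = ((j : ℝ) + 1) / 2 ^ d := by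
      rw [h2K]; field_simp
    constructor
    · push_cast
      calc (jd : ℝ) ≤ (j : ℝ) / 2 ^ d := e1
        _ = (j : ℝ) / 2 ^ K * 2 ^ (k + 1) := e2
        _ ≤ x * 2 ^ (k + 1) := mul_le_mul_of_nonneg_right h1 hp1.le
    · push_cast
      calc x * 2 ^ (k + 1) < ((j : ℝ) + 1) / 2 ^ K * 2 ^ (k + 1) :=
            mul_lt_mul_of_pos_right h2 hp1
        _ = ((j : ℝ) + 1) / 2 ^ d := e4
        _ ≤ (jd : ℝ) + 1 := e3
  unfold digit eps
  rw [hfloor, Int.toNat_natCast, Nat.testBit_eq_decide_div_mod_eq]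
  rcases Nat.mod_two_eq_zero_or_one jd with h | h <;> simp [← hjd, h]

/-- The value of `walsh n` on the dyadic interval `[j/2^K, (j+1)/2^K)`. -/
def wval (K n j : ℕ) : ℝ := (-1 : ℝ) ^ (∑ k ∈ Finset.range K, eps k n * eps (K - 1 - k) j)

lemma walsh_eq_wval {K n j : ℕ} (hn : n < 2 ^ K) {x : ℝ}
    (h1 : (j : ℝ) / 2 ^ K ≤ x) (h2 : x < ((j : ℝ) + 1) / 2 ^ K) :
    walsh n x = wval K n j := by
  rw [walsh_eq_pow_sum n hn, wval]
  congr 1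
  exact Finset.sum_congr rfl fun k hk => by
    rw [digit_eq_eps (Finset.mem_range.mp hk) h1 h2]

lemma measurable_digit (k : ℕ) : Measurable fun x : ℝ => digit k x :=
  (Measurable.of_discrete (f := fun z : ℤ => z.toNat % 2)).comp
    (Int.measurable_floor.comp (measurable_id.mul_const _))

lemma measurable_walsh (n : ℕ) : Measurable (walsh n) :=
  (Measurable.of_discrete (f := fun e : ℕ => (-1 : ℝ) ^ e)).comp
    (Finset.measurable_sum _ fun k _ => (measurable_digit k).const_mul _)

lemma abs_walsh (n : ℕ) (x : ℝ) : |walsh n x| = 1 := by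
  rw [walsh, abs_pow, abs_neg, abs_one, one_pow]

lemma walsh_mul_integrableOn (a b : ℕ) {s : Set ℝ} (hs : volume s ≠ ⊤) :
    IntegrableOn (fun t => walsh a t * walsh b t) s := by
  refine Measure.integrableOn_of_bounded hs
    (((measurable_walsh a).mul (measurable_walsh b)).aestronglyMeasurable) (M := 1) ?_
  filter_upwards with t
  rw [Real.norm_eq_abs, abs_mul, abs_walsh, abs_walsh, one_mul]

lemma integral_eq_sum_pieces (g : ℝ → ℝ) (K : ℕ)
    (hint : ∀ u v : ℝ, IntegrableOn g (Set.Ioc u v)) :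
    ∫ t in Set.Ico (0:ℝ) 1, g t
      = ∑ j ∈ Finset.range (2 ^ K),
          ∫ t in Set.Ico ((j : ℝ) / 2 ^ K) (((j : ℝ) + 1) / 2 ^ K), g t := by
  have hKpos : (0:ℝ) < 2 ^ K := by positivity
  have key := intervalIntegral.sum_integral_adjacent_intervals
      (a := fun j : ℕ => (j : ℝ) / 2 ^ K) (n := 2 ^ K) (f := g) (μ := volume)
      (fun k _ => by
        rw [intervalIntegrable_iff]
        exact hint _ _)
  have h0 : ((0 : ℕ) : ℝ) / 2 ^ K = 0 := by simp
  have h1 : ((2 ^ K : ℕ) : ℝ) / 2 ^ K = 1 := by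
    push_cast; field_simp
  rw [h0, h1] at key
  calc ∫ t in Set.Ico (0:ℝ) 1, g t
      = ∫ t in Set.Ioc (0:ℝ) 1, g t := setIntegral_congr_set Ico_ae_eq_Ioc
    _ = ∫ t in (0:ℝ)..1, g t := (intervalIntegral.integral_of_le zero_le_one).symm
    _ = ∑ j ∈ Finset.range (2 ^ K), ∫ t in ((j:ℝ)/2^K)..(((j:ℕ)+1:ℕ):ℝ)/2^K, g t := key.symm
    _ = ∑ j ∈ Finset.range (2 ^ K),
          ∫ t in Set.Ico ((j : ℝ) / 2 ^ K) (((j : ℝ) + 1) / 2 ^ K), g t := by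
        refine Finset.sum_congr rfl fun j _ => ?_
        have hle : (j : ℝ) / 2 ^ K ≤ ((j : ℝ) + 1) / 2 ^ K := by
          gcongr
          linarith
        have hcast : (((j : ℕ) + 1 : ℕ) : ℝ) = (j : ℝ) + 1 := by push_cast; ring
        rw [hcast, intervalIntegral.integral_of_le hle,
          ← setIntegral_congr_set Ico_ae_eq_Ioc]

lemma walsh_orth (a b : ℕ) :
    ∫ t in Set.Ico (0:ℝ) 1, walsh a t * walsh b t = if a = b then 1 else 0 := by
  by_cases hab : a = b
  · subst hab
    rw [if_pos rfl]
    rw [setIntegral_congr_fun measurableSet_Ico (g := fun _ => (1:ℝ))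
      (fun t _ => by rw [walsh, ← pow_add]; exact Even.neg_one_pow ⟨_, rfl⟩)]
    simp [Real.volume_Ico]
  · rw [if_neg hab]
    set K := max a b + 1 with hK
    have haK : a < 2 ^ K := by
      calc a ≤ max a b := le_max_left _ _
        _ < 2 ^ (max a b) := Nat.lt_two_pow_self
        _ ≤ 2 ^ K := Nat.pow_le_pow_right (by norm_num) (by omega)
    have hbK : b < 2 ^ K := by
      calc b ≤ max a b := le_max_right _ _
        _ < 2 ^ (max a b) := Nat.lt_two_pow_self
        _ ≤ 2 ^ K := Nat.pow_le_pow_right (by norm_num) (by omega)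
    rw [integral_eq_sum_pieces _ K (fun u v => walsh_mul_integrableOn a b (by
      rw [Real.volume_Ioc]; exact ENNReal.ofReal_ne_top))]
    have hpiece : ∀ j ∈ Finset.range (2 ^ K),
        (∫ t in Set.Ico ((j:ℝ)/2^K) (((j:ℝ)+1)/2^K), walsh a t * walsh b t)
          = (wval K a j * wval K b j) * (1 / 2 ^ K) := by
      intro j _
      rw [setIntegral_congr_fun measurableSet_Ico (g := fun _ => wval K a j * wval K b j)
        (fun t ht => by rw [walsh_eq_wval haK ht.1 ht.2, walsh_eq_wval hbK ht.1 ht.2])]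
      rw [setIntegral_const, Real.volume_real_Ico, smul_eq_mul]
      have hlen : ((j:ℝ)+1)/2^K - (j:ℝ)/2^K = 1 / 2 ^ K := by ring
      rw [hlen, max_eq_left (by positivity)]
      ring
    rw [Finset.sum_congr rfl hpiece, ← Finset.sum_mul]
    suffices h : ∑ j ∈ Finset.range (2 ^ K), wval K a j * wval K b j = 0 by
      rw [h, zero_mul]
    obtain ⟨k0, hk0⟩ : ∃ k, a.testBit k ≠ b.testBit k := by
      by_contra h; push_neg at h; exact hab (Nat.eq_of_testBit_eq h)
    have hk0K : k0 < K := by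
      by_contra h
      push_neg at h
      apply hk0
      rw [Nat.testBit_lt_two_pow (lt_of_lt_of_le haK (Nat.pow_le_pow_right (by norm_num) h)),
          Nat.testBit_lt_two_pow (lt_of_lt_of_le hbK (Nat.pow_le_pow_right (by norm_num) h))]
    set d := K - 1 - k0 with hd
    have hdK : d < K := by omega
    set T : ℕ → ℕ := fun j' => ∑ k ∈ Finset.range K, (eps k a + eps k b) * eps (K - 1 - k) j'
      with hT
    have hval : ∀ j', wval K a j' * wval K b j' = (-1:ℝ) ^ T j' := by
      intro j'
      rw [wval, wval, ← pow_add, hT]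
      congr 1
      rw [← Finset.sum_add_distrib]
      exact Finset.sum_congr rfl fun k _ => by ring
    refine Finset.sum_involution (fun j _ => j ^^^ 2 ^ d) ?_ ?_ ?_ ?_
    · intro j hj
      show wval K a j * wval K b j + wval K a (j ^^^ 2 ^ d) * wval K b (j ^^^ 2 ^ d) = 0
      have hodd : Odd (T j + T (j ^^^ 2 ^ d)) := by
        rw [hT]
        simp only
        rw [← Finset.sum_add_distrib,
          ← Finset.add_sum_erase _ _ (Finset.mem_range.2 hk0K)]
        have hc : eps k0 a + eps k0 b = 1 := by
          unfold eps
          cases ha : a.testBit k0 <;> cases hb : b.testBit k0 <;> simp_all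
        have he : eps (K - 1 - k0) j + eps (K - 1 - k0) (j ^^^ 2 ^ d) = 1 := by
          unfold eps
          rw [← hd, Nat.testBit_xor, Nat.testBit_two_pow]
          cases h : j.testBit d <;> simp [h]
        have h1 : (eps k0 a + eps k0 b) * eps (K - 1 - k0) j
            + (eps k0 a + eps k0 b) * eps (K - 1 - k0) (j ^^^ 2 ^ d) = 1 := by
          rw [hc]
          simpa using he
        rw [h1]
        refine Even.one_add (Finset.even_sum _ fun k hk => ?_)
        have hkne : k ≠ k0 := (Finset.mem_erase.1 hk).1
        have hkK : k < K := Finset.mem_range.1 (Finset.mem_erase.1 hk).2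
        have hne : K - 1 - k ≠ d := by omega
        have hdne : (2 ^ d).testBit (K - 1 - k) = false := by
          rw [Nat.testBit_two_pow]
          simp only [decide_eq_false_iff_not]
          exact fun hh => hne hh.symm
        have heq : eps (K - 1 - k) (j ^^^ 2 ^ d) = eps (K - 1 - k) j := by
          unfold eps
          rw [Nat.testBit_xor, hdne, Bool.xor_false]
        rw [heq]
        exact ⟨(eps k a + eps k b) * eps (K - 1 - k) j, by ring⟩
      rw [hval, hval]
      have hAB : (-1:ℝ) ^ T j * (-1:ℝ) ^ T (j ^^^ 2 ^ d) = -1 := by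
        rw [← pow_add]; exact Odd.neg_one_pow hodd
      have hA : (-1:ℝ) ^ T j * (-1:ℝ) ^ T j = 1 := by
        rw [← pow_add]; exact Even.neg_one_pow ⟨T j, rfl⟩
      have hB : (-1:ℝ) ^ T (j ^^^ 2 ^ d) = -(-1:ℝ) ^ T j := by
        have h1 : (-1:ℝ) ^ T j * ((-1:ℝ) ^ T j * (-1:ℝ) ^ T (j ^^^ 2 ^ d))
            = (-1:ℝ) ^ T j * (-1) := by rw [hAB]
        rw [← mul_assoc, hA, one_mul] at h1
        linarith
      rw [hB]; ring
    · intro j hj _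
      intro h
      replace h : j ^^^ 2 ^ d = j := h
      have h2 := congrArg (fun z => Nat.testBit z d) h
      simp [Nat.testBit_xor, Nat.testBit_two_pow] at h2
    · intro j hj
      exact Finset.mem_range.2 (Nat.xor_lt_two_pow (Finset.mem_range.1 hj)
        (Nat.pow_lt_pow_right (by norm_num) hdK))
    · intro j hj
      show j ^^^ 2 ^ d ^^^ 2 ^ d = j
      rw [Nat.xor_assoc, Nat.xor_self, Nat.xor_zero]

lemma coeff_eq (M i : ℕ) :
    ∫ t in Set.Ico (0:ℝ) 1, (D (2 ^ (M + 1)) t - D (2 ^ M) t) * walsh i t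
      = if 2 ^ M ≤ i ∧ i < 2 ^ (M + 1) then 1 else 0 := by
  have hMle : 2 ^ M ≤ 2 ^ (M + 1) := Nat.pow_le_pow_right (by norm_num) (by omega)
  have hD : ∀ t, (D (2 ^ (M + 1)) t - D (2 ^ M) t) * walsh i t
      = ∑ k ∈ Finset.Ico (2 ^ M) (2 ^ (M + 1)), walsh k t * walsh i t := by
    intro t
    rw [← Finset.sum_mul, Finset.sum_Ico_eq_sub _ hMle]
    rfl
  simp only [hD]
  rw [integral_finset_sum _ (fun k _ => walsh_mul_integrableOn k i (by
    rw [Real.volume_Ico]; exact ENNReal.ofReal_ne_top))]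
  rw [Finset.sum_congr rfl (fun k _ => walsh_orth k i), Finset.sum_ite_eq' _ i (fun _ => (1:ℝ))]
  simp [Finset.mem_Ico]

lemma eps_two_pow_add {M u : ℕ} (hu : u < 2 ^ M) (k : ℕ) :
    eps k (2 ^ M + u) = eps k (2 ^ M) + eps k u := by
  unfold eps
  rcases lt_trichotomy k M with h | h | h
  · rw [Nat.testBit_two_pow_add_gt h, Nat.testBit_two_pow]
    simp [Nat.ne_of_gt h]
  · subst h
    rw [Nat.testBit_two_pow_add_eq, Nat.testBit_lt_two_pow hu, Nat.testBit_two_pow]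
    simp
  · have h1 : 2 ^ M + u < 2 ^ k := by
      calc 2 ^ M + u < 2 ^ M + 2 ^ M := by omega
        _ = 2 ^ (M + 1) := by ring
        _ ≤ 2 ^ k := Nat.pow_le_pow_right (by norm_num) (by omega)
    rw [Nat.testBit_lt_two_pow h1, Nat.testBit_lt_two_pow (lt_of_lt_of_le hu
      (Nat.pow_le_pow_right (by norm_num) h.le)), Nat.testBit_two_pow]
    simp [Nat.ne_of_lt h]

lemma walsh_two_pow_add {M u : ℕ} (hu : u < 2 ^ M) (x : ℝ) :
    walsh (2 ^ M + u) x = walsh (2 ^ M) x * walsh u x := by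
  have h2 : (2:ℕ) ^ M < 2 ^ (M + 1) := Nat.pow_lt_pow_right (by norm_num) (by omega)
  have h1 : 2 ^ M + u < 2 ^ (M + 1) := by
    have : (2:ℕ) ^ (M + 1) = 2 ^ M + 2 ^ M := by ring
    omega
  have hu1 : u < 2 ^ (M + 1) := lt_trans hu h2
  rw [walsh_eq_pow_sum _ h1 x, walsh_eq_pow_sum _ h2 x, walsh_eq_pow_sum _ hu1 x, ← pow_add]
  congr 1
  rw [← Finset.sum_add_distrib]
  exact Finset.sum_congr rfl fun k _ => by rw [eps_two_pow_add hu]; ring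

lemma S_dirichlet_diff_zero {M k : ℕ} (hk : k ≤ 2 ^ M) (x : ℝ) :
    S (fun y => D (2 ^ (M + 1)) y - D (2 ^ M) y) k x = 0 := by
  rw [S]
  refine Finset.sum_eq_zero fun i hi => ?_
  have hi' : i < 2 ^ M := lt_of_lt_of_le (Finset.mem_range.1 hi) hk
  rw [coeff_eq M i, if_neg (by omega), zero_mul]

lemma S_dirichlet_diff {M j : ℕ} (hj : j ≤ 2 ^ M) (x : ℝ) :
    S (fun y => D (2 ^ (M + 1)) y - D (2 ^ M) y) (2 ^ M + j) x
      = walsh (2 ^ M) x * D j x := by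
  rw [S]
  have hstep : ∀ i ∈ Finset.range (2 ^ M + j),
      (∫ t in Set.Ico (0:ℝ) 1,
          (D (2 ^ (M + 1)) t - D (2 ^ M) t) * walsh i t) * walsh i x
        = if 2 ^ M ≤ i then walsh i x else 0 := by
    intro i hi
    have hi' : i < 2 ^ M + j := Finset.mem_range.1 hi
    have h2 : (2:ℕ) ^ (M + 1) = 2 ^ M + 2 ^ M := by ring
    rw [coeff_eq M i]
    by_cases h : 2 ^ M ≤ i
    · rw [if_pos ⟨h, by omega⟩, if_pos h, one_mul]
    · rw [if_neg (by omega), if_neg h, zero_mul]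
  rw [Finset.sum_congr rfl hstep]
  rw [Finset.sum_ite, Finset.sum_const_zero, add_zero]
  have hfilter : Finset.filter (fun i => 2 ^ M ≤ i) (Finset.range (2 ^ M + j))
      = Finset.Ico (2 ^ M) (2 ^ M + j) := by
    ext i
    simp [Finset.mem_Ico, Finset.mem_filter, Finset.mem_range]
    omega
  rw [hfilter, Finset.sum_Ico_eq_sum_range]
  simp only [Nat.add_sub_cancel_left]
  rw [D, Finset.mul_sum]
  exact Finset.sum_congr rfl fun u hu =>
    walsh_two_pow_add (lt_of_lt_of_le (Finset.mem_range.1 hu) hj) x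

end Aux

end Walsh

/-- explicit formula for the Nörlund mean of index `2^M + m`
(`1 ≤ m < 2^M`) of `f = D_{2^{M+1}} - D_{2^M}`. -/
theorem norlund_mean_of_dirichlet_difference
    (q : ℕ → ℝ) (hq_nonneg : ∀ k, 0 ≤ q k) (hq0 : 0 < q 0)
    (M : ℕ) (m : ℕ) (hm1 : 1 ≤ m) (hm2 : m < 2 ^ M)
    (x : ℝ) (hx : x ∈ Set.Ico (0:ℝ) 1) :
    Walsh.t q (2 ^ M + m) (fun y => Walsh.D (2 ^ (M + 1)) y - Walsh.D (2 ^ M) y) x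
      = (Walsh.walsh (2 ^ M) x / Walsh.Q q (2 ^ M + m)) *
          ∑ k ∈ Finset.Icc 1 m, q (m - k) * Walsh.D k x := by
  classical
  set f0 : ℝ → ℝ := fun y => Walsh.D (2 ^ (M + 1)) y - Walsh.D (2 ^ M) y with hf0
  rw [Walsh.t]
  have hIcc : Finset.Icc 1 (2 ^ M + m) = Finset.Ioc 0 (2 ^ M + m) :=
    Finset.Icc_succ_left_eq_Ioc 0 (2 ^ M + m)
  rw [hIcc, ← Finset.sum_Ioc_consecutive _ (Nat.zero_le (2 ^ M)) (Nat.le_add_right _ m)]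
  have hz : ∑ k ∈ Finset.Ioc 0 (2 ^ M), q (2 ^ M + m - k) * Walsh.S f0 k x = 0 := by
    refine Finset.sum_eq_zero fun k hk => ?_
    have hk' := Finset.mem_Ioc.1 hk
    rw [hf0, Walsh.S_dirichlet_diff_zero hk'.2 x, mul_zero]
  rw [hz, zero_add]
  have hre : ∑ k ∈ Finset.Ioc (2 ^ M) (2 ^ M + m), q (2 ^ M + m - k) * Walsh.S f0 k x
      = Walsh.walsh (2 ^ M) x * ∑ k ∈ Finset.Icc 1 m, q (m - k) * Walsh.D k x := by
    rw [Finset.mul_sum]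
    refine Finset.sum_nbij' (fun k => k - 2 ^ M) (fun u => 2 ^ M + u) ?_ ?_ ?_ ?_ ?_
    · intro k hk
      have hk' := Finset.mem_Ioc.1 hk
      simp [Finset.mem_Icc]
      omega
    · intro u hu
      have hu' := Finset.mem_Icc.1 hu
      simp [Finset.mem_Ioc]
      omega
    · intro k hk
      have hk' := Finset.mem_Ioc.1 hk
      show 2 ^ M + (k - 2 ^ M) = k
      omega
    · intro u hu
      show (2 ^ M + u) - 2 ^ M = u
      omega
    · intro k hk
      have hk' := Finset.mem_Ioc.1 hk
      obtain ⟨j, rfl⟩ : ∃ j, k = 2 ^ M + j := ⟨k - 2 ^ M, by omega⟩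
      show q (2 ^ M + m - (2 ^ M + j)) * Walsh.S f0 (2 ^ M + j) x
        = Walsh.walsh (2 ^ M) x * (q (m - ((2 ^ M + j) - 2 ^ M)) * Walsh.D ((2 ^ M + j) - 2 ^ M) x)
      have e1 : 2 ^ M + m - (2 ^ M + j) = m - j := by omega
      have e2 : (2 ^ M + j) - 2 ^ M = j := by omega
      have e3 : j ≤ 2 ^ M := by omega
      rw [e1, e2, hf0, Walsh.S_dirichlet_diff e3 x]
      ring
  rw [hre]
  ring
end
end

section
/- Let {q_k}_{k≥0} be a sequence of nonnegative reals with q_0 > 0. Let n ≥ 1 have binary decomposition n = 2^{n_1} + 2^{n_2} + ⋯ + 2^{n_r} with n_1 > n_2 > ⋯ > n_r ≥ 0, and set n^{(0)} := n, n^{(j)} := n^{(j−1)} − 2^{n_j} for 1 ≤ j ≤ r. Then the Walsh–Nörlund kernel satisfies the pointwise identity on [0,1): F_n = (w_n/Q_n) Σ_{j=1}^{r} Q_{n^{(j−1)}} w_{2^{n_j}} D_{2^{n_j}} − (w_n/Q_n) Σ_{j=1}^{r} w_{n^{(j−1)}} w_{2^{n_j}−1} Σ_{k=1}^{2^{n_j}−1}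 q_{k+n^{(j)}} D_k. -/
open MeasureTheory Filter
open scoped ENNReal NNReal

noncomputable section

namespace Walsh

private lemma neg_one_pow_congr {a b : ℕ} (h : a % 2 = b % 2) : ((-1:ℝ)) ^ a = (-1) ^ b := by
  rcases Nat.even_or_odd a with ha | ha
  · have hb : Even b := by rw [Nat.even_iff] at ha ⊢; omega
    rw [ha.neg_one_pow, hb.neg_one_pow]
  · have hb : Odd b := by rw [Nat.odd_iff] at ha ⊢; omega
    rw [ha.neg_one_pow, hb.neg_one_pow]

private lemma eps_sum_ext {M N n : ℕ} (hM : n < 2 ^ M) (hMN : M ≤ N) (d : ℕ → ℕ) :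
    ∑ k ∈ Finset.range M, eps k n * d k = ∑ k ∈ Finset.range N, eps k n * d k := by
  apply Finset.sum_subset (Finset.range_subset_range.2 hMN)
  intro k _ hk
  simp only [Finset.mem_range, not_lt] at hk
  have : n < 2 ^ k := lt_of_lt_of_le hM (Nat.pow_le_pow_right (by norm_num) hk)
  simp [eps, Nat.testBit_lt_two_pow this]

private lemma walsh_eq_of_lt {N n : ℕ} (h : n < 2 ^ N) (x : ℝ) :
    walsh n x = (-1:ℝ) ^ (∑ k ∈ Finset.range N, eps k n * digit k x) := by
  have h1 : n < 2 ^ (n + 1) := by have := (Nat.lt_two_pow_self (n := n + 1)); omega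
  unfold walsh
  congr 1
  rcases le_total (n + 1) N with hle | hle
  · exact eps_sum_ext h1 hle _
  · exact (eps_sum_ext h hle _).symm

private lemma walsh_mul (a b : ℕ) (x : ℝ) :
    walsh a x * walsh b x = walsh (a ^^^ b) x := by
  have hm := (Nat.lt_two_pow_self (n := max a b))
  have h2 : (2:ℕ) ^ max a b ≤ 2 ^ (max a b + 1) := Nat.pow_le_pow_right (by norm_num) (Nat.le_succ _)
  have ha : a < 2 ^ (max a b + 1) := lt_of_le_of_lt (le_max_left a b) (lt_of_lt_of_le hm h2)
  have hb : b < 2 ^ (max a b + 1) := lt_of_le_of_lt (le_max_right a b) (lt_of_lt_of_le hm h2)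
  have hx : a ^^^ b < 2 ^ (max a b + 1) := Nat.xor_lt_two_pow ha hb
  rw [walsh_eq_of_lt ha, walsh_eq_of_lt hb, walsh_eq_of_lt hx, ← pow_add]
  apply neg_one_pow_congr
  rw [← Finset.sum_add_distrib, Finset.sum_nat_mod,
      Finset.sum_nat_mod _ 2 (fun k => eps k (a ^^^ b) * digit k x)]
  congr 1
  refine Finset.sum_congr rfl fun k _ => ?_
  cases h1 : a.testBit k <;> cases h2 : b.testBit k <;>
    simp [eps, Nat.testBit_xor, h1, h2, Nat.add_mul] <;> omega

private lemma walsh_zero_eq (x : ℝ) : walsh 0 x = 1 := by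
  simp [walsh, eps]

private lemma walsh_sq (n : ℕ) (x : ℝ) : walsh n x * walsh n x = 1 := by
  rw [walsh_mul, Nat.xor_self, walsh_zero_eq]

private lemma xor_eq_add {t a b : ℕ} (ha : 2 ^ t ∣ a) (hb : b < 2 ^ t) :
    a ^^^ b = a + b := by
  obtain ⟨c, rfl⟩ := ha
  apply Nat.eq_of_testBit_eq
  intro i
  rw [Nat.testBit_xor]
  rcases Nat.lt_or_ge i t with h | h
  · have ht : i + 1 + (t - i - 1) = t := by omega
    have e : 2 ^ t * c = 2 ^ i * (2 * (2 ^ (t - i - 1) * c)) := by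
      calc 2 ^ t * c = 2 ^ (i + 1 + (t - i - 1)) * c := by rw [ht]
        _ = 2 ^ (i + 1) * 2 ^ (t - i - 1) * c := by rw [pow_add]
        _ = 2 ^ i * (2 * (2 ^ (t - i - 1) * c)) := by ring
    have hta : Nat.testBit (2 ^ t * c) i = false := by
      rw [Nat.testBit_eq_decide_div_mod_eq, e, Nat.mul_div_cancel_left _ (pow_pos (by norm_num : (0:ℕ) < 2) i)]
      simp [Nat.mul_mod_right]
    have htb : Nat.testBit (2 ^ t * c + b) i = Nat.testBit b i := by
      rw [Nat.testBit_eq_decide_div_mod_eq, Nat.testBit_eq_decide_div_mod_eq]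
      have hdiv : (2 ^ t * c + b) / 2 ^ i = b / 2 ^ i + 2 * (2 ^ (t - i - 1) * c) := by
        rw [e, Nat.add_comm, Nat.add_mul_div_left _ _ (pow_pos (by norm_num : (0:ℕ) < 2) i)]
      rw [hdiv, Nat.add_mul_mod_self_left]
    rw [hta, htb, Bool.false_xor]
  · have hbf : Nat.testBit b i = false :=
      Nat.testBit_lt_two_pow (lt_of_lt_of_le hb (Nat.pow_le_pow_right (by norm_num) h))
    have hdd : (2 ^ t * c + b) / 2 ^ i = 2 ^ t * c / 2 ^ i := by
      have h1 : (2 ^ t * c + b) / 2 ^ t = c := by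
        rw [Nat.mul_add_div (pow_pos (by norm_num : (0:ℕ) < 2) t), Nat.div_eq_of_lt hb, add_zero]
      have h2 : 2 ^ t * c / 2 ^ t = c := Nat.mul_div_cancel_left c (pow_pos (by norm_num : (0:ℕ) < 2) t)
      have h3 : (2:ℕ) ^ i = 2 ^ t * 2 ^ (i - t) := by rw [← pow_add]; congr 1; omega
      rw [h3, ← Nat.div_div_eq_div_mul, ← Nat.div_div_eq_div_mul, h1, h2]
    rw [hbf, Bool.xor_false, Nat.testBit_eq_decide_div_mod_eq, Nat.testBit_eq_decide_div_mod_eq, hdd]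

private lemma walsh_add_of_dvd {t a b : ℕ} (ha : 2 ^ t ∣ a) (hb : b < 2 ^ t) (x : ℝ) :
    walsh (a + b) x = walsh a x * walsh b x := by
  rw [walsh_mul, xor_eq_add ha hb]

private lemma sub_xor (s : ℕ) : ∀ v, v < 2 ^ s → (2 ^ s - 1 - v) ^^^ v = 2 ^ s - 1 := by
  induction s with
  | zero =>
    intro v hv
    simp only [pow_zero] at hv ⊢
    have : v = 0 := by omega
    subst this
    rfl
  | succ s ih =>
    intro v hv
    have hpow : 2 ^ (s + 1) = 2 ^ s * 2 := pow_succ 2 s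
    have hp : 0 < 2 ^ s := pow_pos (by norm_num) s
    rcases Nat.lt_or_ge v (2 ^ s) with h | h
    · have e1 : 2 ^ (s + 1) - 1 - v = 2 ^ s + (2 ^ s - 1 - v) := by omega
      rw [e1, ← xor_eq_add (dvd_refl (2 ^ s)) (show 2 ^ s - 1 - v < 2 ^ s by omega),
          Nat.xor_assoc, ih v h, xor_eq_add (dvd_refl (2 ^ s)) (show 2 ^ s - 1 < 2 ^ s by omega)]
      omega
    · have hv' : v - 2 ^ s < 2 ^ s := by omega
      have key := ih (v - 2 ^ s) hv'
      calc (2 ^ (s + 1) - 1 - v) ^^^ v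
          = (2 ^ s - 1 - (v - 2 ^ s)) ^^^ (2 ^ s ^^^ (v - 2 ^ s)) := by
            congr 1
            · omega
            · rw [xor_eq_add (dvd_refl _) hv']; omega
        _ = ((2 ^ s - 1 - (v - 2 ^ s)) ^^^ (v - 2 ^ s)) ^^^ 2 ^ s := by
            rw [Nat.xor_comm (2 ^ s) (v - 2 ^ s), ← Nat.xor_assoc]
        _ = (2 ^ s - 1) ^^^ 2 ^ s := by rw [key]
        _ = 2 ^ (s + 1) - 1 := by
            rw [Nat.xor_comm, xor_eq_add (dvd_refl (2 ^ s)) (show 2 ^ s - 1 < 2 ^ s by omega)]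
            omega

private lemma compl_xor {s v : ℕ} (hv : v < 2 ^ s) : (2 ^ s - 1) ^^^ v = 2 ^ s - 1 - v := by
  have h := sub_xor s v hv
  calc (2 ^ s - 1) ^^^ v = ((2 ^ s - 1 - v) ^^^ v) ^^^ v := by rw [h]
    _ = 2 ^ s - 1 - v := by rw [Nat.xor_assoc, Nat.xor_self, Nat.xor_zero]

private lemma sum_swap_tri (n : ℕ) (g : ℕ → ℕ → ℝ) :
    ∑ k ∈ Finset.Icc 1 n, ∑ u ∈ Finset.range k, g k u
      = ∑ u ∈ Finset.range n, ∑ k ∈ Finset.Icc (u + 1) n, g k u := by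
  have h1 : ∀ k ∈ Finset.Icc 1 n, ∑ u ∈ Finset.range k, g k u
      = ∑ u ∈ Finset.range n, if u < k then g k u else 0 := by
    intro k hk
    simp only [Finset.mem_Icc] at hk
    rw [← Finset.sum_filter]
    apply Finset.sum_congr
    · ext u
      simp only [Finset.mem_filter, Finset.mem_range]
      omega
    · intros; rfl
  rw [Finset.sum_congr rfl h1, Finset.sum_comm]
  refine Finset.sum_congr rfl fun u _ => ?_
  rw [← Finset.sum_filter]
  apply Finset.sum_congr
  · ext k
    simp only [Finset.mem_filter, Finset.mem_Icc]
    omega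
  · intros; rfl

private lemma sum_range_add' (g : ℕ → ℝ) (a b : ℕ) :
    ∑ u ∈ Finset.range (a + b), g u
      = (∑ u ∈ Finset.range a, g u) + ∑ v ∈ Finset.range b, g (a + v) := by
  rw [Finset.range_eq_Ico, ← Finset.sum_Ico_consecutive g (Nat.zero_le a) (Nat.le_add_right a b)]
  simp [Finset.sum_Ico_eq_sum_range, Nat.add_sub_cancel_left]

private lemma geom_two (m : ℕ) : ∑ t ∈ Finset.range m, 2 ^ t = 2 ^ m - 1 := by
  induction m with
  | zero => simp
  | succ m ih =>
    rw [Finset.sum_range_succ, ih]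
    have h1 : 0 < 2 ^ m := pow_pos (by norm_num) m
    have h2 : 2 ^ (m + 1) = 2 ^ m * 2 := pow_succ 2 m
    omega

private lemma walsh_mul_D (s c : ℕ) (hc : c < 2 ^ s) (x : ℝ) :
    walsh c x * D (2 ^ s) x = D (2 ^ s) x := by
  unfold D
  rw [Finset.mul_sum]
  refine Finset.sum_nbij' (fun v => c ^^^ v) (fun v => c ^^^ v) ?_ ?_ ?_ ?_ ?_
  · intro v hv
    simp only [Finset.mem_range] at hv ⊢
    exact Nat.xor_lt_two_pow hc hv
  · intro v hv
    simp only [Finset.mem_range] at hv ⊢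
    exact Nat.xor_lt_two_pow hc hv
  · intro v _
    simp [← Nat.xor_assoc]
  · intro v _
    simp [← Nat.xor_assoc]
  · intro v _
    exact walsh_mul c v x

private lemma star_lemma (q : ℕ → ℝ) (s m : ℕ) (hm : m < 2 ^ s) (x : ℝ) :
    ∑ v ∈ Finset.range (2 ^ s), Q q (2 ^ s + m - v) * walsh v x
      = Q q (2 ^ s + m) * (walsh m x * D (2 ^ s) x)
        - walsh (2 ^ s - 1) x * ∑ k ∈ Finset.Icc 1 (2 ^ s - 1), q (k + m) * D k x := by
  have hp : 0 < 2 ^ s := pow_pos (by norm_num) s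
  have hLHS : ∑ v ∈ Finset.range (2 ^ s), Q q (2 ^ s + m - v) * walsh v x
      = ∑ v ∈ Finset.range (2 ^ s), Q q (m + v + 1) * (walsh (2 ^ s - 1) x * walsh v x) := by
    rw [← Finset.sum_range_reflect]
    refine Finset.sum_congr rfl fun v hv => ?_
    simp only [Finset.mem_range] at hv
    rw [show 2 ^ s + m - (2 ^ s - 1 - v) = m + v + 1 from by omega,
        show 2 ^ s - 1 - v = (2 ^ s - 1) ^^^ v from (compl_xor hv).symm, ← walsh_mul]
  have hT1 : Q q (2 ^ s + m) * (walsh m x * D (2 ^ s) x)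
      = ∑ v ∈ Finset.range (2 ^ s), Q q (2 ^ s + m) * (walsh (2 ^ s - 1) x * walsh v x) := by
    rw [walsh_mul_D s m hm x, ← walsh_mul_D s (2 ^ s - 1) (by omega) x]
    simp only [D, Finset.mul_sum]
  have hT2 : walsh (2 ^ s - 1) x * ∑ k ∈ Finset.Icc 1 (2 ^ s - 1), q (k + m) * D k x
      = ∑ v ∈ Finset.range (2 ^ s - 1),
          (Q q (2 ^ s + m) - Q q (m + v + 1)) * (walsh (2 ^ s - 1) x * walsh v x) := by
    rw [Finset.mul_sum]
    have e1 : ∀ k ∈ Finset.Icc 1 (2 ^ s - 1),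
        walsh (2 ^ s - 1) x * (q (k + m) * D k x)
          = ∑ v ∈ Finset.range k, q (k + m) * (walsh (2 ^ s - 1) x * walsh v x) := by
      intro k _
      simp only [D, Finset.mul_sum]
      exact Finset.sum_congr rfl fun v _ => by ring
    rw [Finset.sum_congr rfl e1,
        sum_swap_tri (2 ^ s - 1) (fun k v => q (k + m) * (walsh (2 ^ s - 1) x * walsh v x))]
    refine Finset.sum_congr rfl fun v hv => ?_
    simp only [Finset.mem_range] at hv
    rw [← Finset.sum_mul]
    congr 1
    rw [show Finset.Icc (v + 1) (2 ^ s - 1) = Finset.Ico (v + 1) (2 ^ s) from by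
          rw [← Finset.Ico_add_one_right_eq_Icc]; congr 1; omega,
        Finset.sum_Ico_eq_sum_range]
    unfold Q
    rw [← Finset.sum_Ico_eq_sub q (by omega : m + v + 1 ≤ 2 ^ s + m),
        Finset.sum_Ico_eq_sum_range]
    refine Finset.sum_congr (by congr 1; omega) fun i _ => by congr 1; omega
  have hext : ∑ v ∈ Finset.range (2 ^ s - 1),
        (Q q (2 ^ s + m) - Q q (m + v + 1)) * (walsh (2 ^ s - 1) x * walsh v x)
      = ∑ v ∈ Finset.range (2 ^ s),
          (Q q (2 ^ s + m) - Q q (m + v + 1)) * (walsh (2 ^ s - 1) x * walsh v x) := by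
    have hsucc := Finset.sum_range_succ
      (fun v => (Q q (2 ^ s + m) - Q q (m + v + 1)) * (walsh (2 ^ s - 1) x * walsh v x)) (2 ^ s - 1)
    rw [show 2 ^ s - 1 + 1 = 2 ^ s from by omega] at hsucc
    rw [hsucc, show m + (2 ^ s - 1) + 1 = 2 ^ s + m from by omega, sub_self, zero_mul, add_zero]
  rw [hLHS, hT1, hT2, hext, ← Finset.sum_sub_distrib]
  exact Finset.sum_congr rfl fun v _ => by ring

end Walsh

/-- decomposition of the Nörlund kernel along the binary
decomposition `n = 2^{n_1} + ⋯ + 2^{n_r}`, with `n^{(j)} = n - Σ_{i ≤ j} 2^{n_i}`. -/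
theorem norlund_kernel_decomposition
    (q : ℕ → ℝ) (hq_nonneg : ∀ k, 0 ≤ q k) (hq0 : 0 < q 0)
    (n r : ℕ) (hn : 1 ≤ n) (ns : ℕ → ℕ)
    (hdec : ∀ i j, i < j → j < r → ns j < ns i)
    (hrep : n = ∑ j ∈ Finset.range r, 2 ^ ns j)
    (x : ℝ) (hx : x ∈ Set.Ico (0:ℝ) 1) :
    Walsh.F q n x
      = (Walsh.walsh n x / Walsh.Q q n) *
          (∑ j ∈ Finset.range r,
            Walsh.Q q (n - ∑ i ∈ Finset.range j, 2 ^ ns i) *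
              (Walsh.walsh (2 ^ ns j) x * Walsh.D (2 ^ ns j) x))
        - (Walsh.walsh n x / Walsh.Q q n) *
          (∑ j ∈ Finset.range r,
            Walsh.walsh (n - ∑ i ∈ Finset.range j, 2 ^ ns i) x *
              Walsh.walsh (2 ^ ns j - 1) x *
              ∑ k ∈ Finset.Icc 1 (2 ^ ns j - 1),
                q (k + (n - ∑ i ∈ Finset.range (j + 1), 2 ^ ns i)) * Walsh.D k x) := by
  classical
  have hA_succ : ∀ j : ℕ, (∑ i ∈ Finset.range (j + 1), 2 ^ ns i)
      = (∑ i ∈ Finset.range j, 2 ^ ns i) + 2 ^ ns j := fun j => Finset.sum_range_succ _ j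
  have hA_le : ∀ j, j ≤ r → (∑ i ∈ Finset.range j, 2 ^ ns i) ≤ n := by
    intro j hj
    rw [hrep]
    exact Finset.sum_le_sum_of_subset (Finset.range_subset_range.mpr hj)
  have hm'_lt : ∀ j, j < r → n - (∑ i ∈ Finset.range (j + 1), 2 ^ ns i) < 2 ^ ns j := by
    intro j hj
    have hsplit : n = (∑ i ∈ Finset.range (j + 1), 2 ^ ns i)
        + ∑ i ∈ Finset.Ico (j + 1) r, 2 ^ ns i := by
      rw [hrep, Finset.range_eq_Ico,
          ← Finset.sum_Ico_consecutive (fun i => (2:ℕ) ^ ns i) (Nat.zero_le (j + 1)) hj,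
          ← Finset.range_eq_Ico]
    have hinj : ∀ a ∈ Finset.Ico (j + 1) r, ∀ b ∈ Finset.Ico (j + 1) r, ns a = ns b → a = b := by
      intro a ha b hb hab
      simp only [Finset.mem_Ico] at ha hb
      rcases Nat.lt_trichotomy a b with h | h | h
      · have := hdec a b h hb.2; omega
      · exact h
      · have := hdec b a h ha.2; omega
    have himg : (∑ i ∈ Finset.Ico (j + 1) r, 2 ^ ns i)
        = ∑ t ∈ (Finset.Ico (j + 1) r).image ns, 2 ^ t := (Finset.sum_image hinj).symm
    have hsub : (Finset.Ico (j + 1) r).image ns ⊆ Finset.range (ns j) := by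
      intro t ht
      simp only [Finset.mem_image, Finset.mem_Ico] at ht
      obtain ⟨i, ⟨hi1, hi2⟩, rfl⟩ := ht
      exact Finset.mem_range.mpr (hdec j i hi1 hi2)
    have hbound : (∑ i ∈ Finset.Ico (j + 1) r, 2 ^ ns i) ≤ 2 ^ ns j - 1 := by
      rw [himg, ← Walsh.geom_two (ns j)]
      exact Finset.sum_le_sum_of_subset hsub
    have hp : 0 < 2 ^ ns j := pow_pos (by norm_num) (ns j)
    omega
  have hdvd : ∀ j, j < r → (2:ℕ) ^ (ns j + 1) ∣ ∑ i ∈ Finset.range j, 2 ^ ns i := by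
    intro j hj
    refine Finset.dvd_sum fun i hi => ?_
    simp only [Finset.mem_range] at hi
    exact pow_dvd_pow 2 (by have := hdec i j hi hj; omega)
  have step1 : (∑ k ∈ Finset.Icc 1 n, q (n - k) * Walsh.D k x)
      = ∑ u ∈ Finset.range n, Walsh.Q q (n - u) * Walsh.walsh u x := by
    have e : ∀ k ∈ Finset.Icc 1 n, q (n - k) * Walsh.D k x
        = ∑ u ∈ Finset.range k, q (n - k) * Walsh.walsh u x := by
      intro k _
      unfold Walsh.D
      rw [Finset.mul_sum]
    rw [Finset.sum_congr rfl e,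
        Walsh.sum_swap_tri n (fun k u => q (n - k) * Walsh.walsh u x)]
    refine Finset.sum_congr rfl fun u hu => ?_
    simp only [Finset.mem_range] at hu
    rw [← Finset.sum_mul]
    congr 1
    unfold Walsh.Q
    refine Finset.sum_nbij' (fun k => n - k) (fun m => n - m) ?_ ?_ ?_ ?_ ?_
    · intro a ha; simp only [Finset.mem_Icc] at ha; simp only [Finset.mem_range]; omega
    · intro a ha; simp only [Finset.mem_range] at ha; simp only [Finset.mem_Icc]; omega
    · intro a ha; simp only [Finset.mem_Icc] at ha; omega
    · intro a ha; simp only [Finset.mem_range] at ha; omega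
    · intro a _; rfl
  have step2 : ∀ (g : ℕ → ℝ) (m : ℕ),
      ∑ u ∈ Finset.range (∑ i ∈ Finset.range m, 2 ^ ns i), g u
        = ∑ j ∈ Finset.range m, ∑ v ∈ Finset.range (2 ^ ns j),
            g ((∑ i ∈ Finset.range j, 2 ^ ns i) + v) := by
    intro g m
    induction m with
    | zero => simp
    | succ m ih =>
      rw [show (∑ i ∈ Finset.range (m + 1), 2 ^ ns i)
            = (∑ i ∈ Finset.range m, 2 ^ ns i) + 2 ^ ns m from Finset.sum_range_succ _ m,
          Walsh.sum_range_add' g _ _, ih,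
          Finset.sum_range_succ (fun j => ∑ v ∈ Finset.range (2 ^ ns j),
            g ((∑ i ∈ Finset.range j, 2 ^ ns i) + v)) m]
  have key : (∑ k ∈ Finset.Icc 1 n, q (n - k) * Walsh.D k x)
      = Walsh.walsh n x * (∑ j ∈ Finset.range r,
            Walsh.Q q (n - ∑ i ∈ Finset.range j, 2 ^ ns i) *
              (Walsh.walsh (2 ^ ns j) x * Walsh.D (2 ^ ns j) x))
        - Walsh.walsh n x * (∑ j ∈ Finset.range r,
            Walsh.walsh (n - ∑ i ∈ Finset.range j, 2 ^ ns i) x *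
              Walsh.walsh (2 ^ ns j - 1) x *
              ∑ k ∈ Finset.Icc 1 (2 ^ ns j - 1),
                q (k + (n - ∑ i ∈ Finset.range (j + 1), 2 ^ ns i)) * Walsh.D k x) := by
    rw [step1]
    calc (∑ u ∈ Finset.range n, Walsh.Q q (n - u) * Walsh.walsh u x)
        = ∑ u ∈ Finset.range (∑ i ∈ Finset.range r, 2 ^ ns i),
            Walsh.Q q (n - u) * Walsh.walsh u x := by rw [← hrep]
      _ = ∑ j ∈ Finset.range r, ∑ v ∈ Finset.range (2 ^ ns j),
            Walsh.Q q (n - ((∑ i ∈ Finset.range j, 2 ^ ns i) + v)) *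
              Walsh.walsh ((∑ i ∈ Finset.range j, 2 ^ ns i) + v) x :=
          step2 (fun u => Walsh.Q q (n - u) * Walsh.walsh u x) r
      _ = ∑ j ∈ Finset.range r,
            (Walsh.walsh n x * (Walsh.Q q (n - ∑ i ∈ Finset.range j, 2 ^ ns i) *
                (Walsh.walsh (2 ^ ns j) x * Walsh.D (2 ^ ns j) x))
              - Walsh.walsh n x * (Walsh.walsh (n - ∑ i ∈ Finset.range j, 2 ^ ns i) x *
                  Walsh.walsh (2 ^ ns j - 1) x *
                  ∑ k ∈ Finset.Icc 1 (2 ^ ns j - 1),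
                    q (k + (n - ∑ i ∈ Finset.range (j + 1), 2 ^ ns i)) * Walsh.D k x)) := ?_
      _ = _ := by rw [Finset.sum_sub_distrib, ← Finset.mul_sum, ← Finset.mul_sum]
    refine Finset.sum_congr rfl fun j hj => ?_
    simp only [Finset.mem_range] at hj
    have hm'lt := hm'_lt j hj
    have hsucc := hA_succ j
    have hA1le : (∑ i ∈ Finset.range (j + 1), 2 ^ ns i) ≤ n := hA_le (j + 1) hj
    have hNn : n - (∑ i ∈ Finset.range j, 2 ^ ns i)
        = 2 ^ ns j + (n - ∑ i ∈ Finset.range (j + 1), 2 ^ ns i) := by omega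
    have hdvd1 := hdvd j hj
    have hdvd0 : (2:ℕ) ^ ns j ∣ ∑ i ∈ Finset.range j, 2 ^ ns i :=
      dvd_trans (pow_dvd_pow 2 (Nat.le_succ (ns j))) hdvd1
    have hlt2 : 2 ^ ns j + (n - ∑ i ∈ Finset.range (j + 1), 2 ^ ns i) < 2 ^ (ns j + 1) := by
      have h2 : (2:ℕ) ^ (ns j + 1) = 2 ^ ns j * 2 := pow_succ 2 (ns j)
      omega
    have hwn : Walsh.walsh n x
        = Walsh.walsh (∑ i ∈ Finset.range j, 2 ^ ns i) x *
            Walsh.walsh (2 ^ ns j + (n - ∑ i ∈ Finset.range (j + 1), 2 ^ ns i)) x := by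
      have h := Walsh.walsh_add_of_dvd hdvd1 hlt2 x
      rw [show (∑ i ∈ Finset.range j, 2 ^ ns i)
            + (2 ^ ns j + (n - ∑ i ∈ Finset.range (j + 1), 2 ^ ns i)) = n from by omega] at h
      exact h
    have hwN : Walsh.walsh (2 ^ ns j + (n - ∑ i ∈ Finset.range (j + 1), 2 ^ ns i)) x
        = Walsh.walsh (2 ^ ns j) x *
            Walsh.walsh (n - ∑ i ∈ Finset.range (j + 1), 2 ^ ns i) x :=
      Walsh.walsh_add_of_dvd (dvd_refl _) hm'lt x
    calc ∑ v ∈ Finset.range (2 ^ ns j),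
          Walsh.Q q (n - ((∑ i ∈ Finset.range j, 2 ^ ns i) + v)) *
            Walsh.walsh ((∑ i ∈ Finset.range j, 2 ^ ns i) + v) x
        = ∑ v ∈ Finset.range (2 ^ ns j),
            Walsh.walsh (∑ i ∈ Finset.range j, 2 ^ ns i) x *
              (Walsh.Q q (2 ^ ns j + (n - ∑ i ∈ Finset.range (j + 1), 2 ^ ns i) - v) *
                Walsh.walsh v x) := by
          refine Finset.sum_congr rfl fun v hv => ?_
          simp only [Finset.mem_range] at hv
          rw [Walsh.walsh_add_of_dvd hdvd0 hv x,
              show n - ((∑ i ∈ Finset.range j, 2 ^ ns i) + v)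
                = 2 ^ ns j + (n - ∑ i ∈ Finset.range (j + 1), 2 ^ ns i) - v from by omega]
          ring
      _ = Walsh.walsh (∑ i ∈ Finset.range j, 2 ^ ns i) x *
            ∑ v ∈ Finset.range (2 ^ ns j),
              Walsh.Q q (2 ^ ns j + (n - ∑ i ∈ Finset.range (j + 1), 2 ^ ns i) - v) *
                Walsh.walsh v x := by rw [Finset.mul_sum]
      _ = Walsh.walsh (∑ i ∈ Finset.range j, 2 ^ ns i) x *
            (Walsh.Q q (2 ^ ns j + (n - ∑ i ∈ Finset.range (j + 1), 2 ^ ns i)) *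
                (Walsh.walsh (n - ∑ i ∈ Finset.range (j + 1), 2 ^ ns i) x *
                  Walsh.D (2 ^ ns j) x)
              - Walsh.walsh (2 ^ ns j - 1) x *
                  ∑ k ∈ Finset.Icc 1 (2 ^ ns j - 1),
                    q (k + (n - ∑ i ∈ Finset.range (j + 1), 2 ^ ns i)) * Walsh.D k x) := by
          rw [Walsh.star_lemma q (ns j) _ hm'lt x]
      _ = Walsh.walsh n x * (Walsh.Q q (n - ∑ i ∈ Finset.range j, 2 ^ ns i) *
              (Walsh.walsh (2 ^ ns j) x * Walsh.D (2 ^ ns j) x))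
            - Walsh.walsh n x * (Walsh.walsh (n - ∑ i ∈ Finset.range j, 2 ^ ns i) x *
                Walsh.walsh (2 ^ ns j - 1) x *
                ∑ k ∈ Finset.Icc 1 (2 ^ ns j - 1),
                  q (k + (n - ∑ i ∈ Finset.range (j + 1), 2 ^ ns i)) * Walsh.D k x) := by
          rw [hNn, hwn, hwN]
          have h1 := Walsh.walsh_sq (2 ^ ns j) x
          have h2 := Walsh.walsh_sq (n - ∑ i ∈ Finset.range (j + 1), 2 ^ ns i) x
          set wA := Walsh.walsh (∑ i ∈ Finset.range j, 2 ^ ns i) x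
          set wP := Walsh.walsh (2 ^ ns j) x
          set wm := Walsh.walsh (n - ∑ i ∈ Finset.range (j + 1), 2 ^ ns i) x
          set wc := Walsh.walsh (2 ^ ns j - 1) x
          set QQ := Walsh.Q q (2 ^ ns j + (n - ∑ i ∈ Finset.range (j + 1), 2 ^ ns i))
          set S := ∑ k ∈ Finset.Icc 1 (2 ^ ns j - 1),
            q (k + (n - ∑ i ∈ Finset.range (j + 1), 2 ^ ns i)) * Walsh.D k x
          set DD := Walsh.D (2 ^ ns j) x
          linear_combination (wA * wc * S * (wm * wm) - wA * QQ * wm * DD) * h1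
            + (wA * wc * S) * h2
  unfold Walsh.F
  rw [key]
  ring
end
end
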